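/- Let n, m ∈ ℕ with n ≥ 1, m ≥ 1, and let K_1, ..., K_m : ℝ → ℝ be odd 2π-periodic functions, each continuous on (0, 2π). Let t_1 < ... < t_{n+m−2} be distinct points in (0, π) (assume n + m ≥ 3). Then there exist reals α_1, ..., α_m, not all zero, and an odd trigonometric polynomial T of degree at most n − 1, such that Σ_{i=1}^m α_i K_i(t_k) = T(t_k) for every k = 1, ..., n + m − 2. -/

import Mathlib

open Finset Real Polynomial Module

lemma exp_I_inj {a c : ℝ} (ha : |a| < π) (hc : |c| < π)
    (h : Complex.exp (a * Complex.I) = Complex.exp (c * Complex.I)) : a = c := by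
  rw [Complex.exp_eq_exp_iff_exists_int] at h
  obtain ⟨k, hk⟩ := h
  have h2 : (a : ℂ) = ((c + k * (2 * π) : ℝ) : ℂ) := by
    apply mul_right_cancel₀ Complex.I_ne_zero
    push_cast
    rw [hk]; ring
  have h3 : a = c + k * (2 * π) := by exact_mod_cast h2
  have hπ : (0:ℝ) < π := Real.pi_pos
  have hk1 : |(k : ℝ)| < 1 := by
    rw [abs_lt] at *
    constructor <;> nlinarith
  have hk0 : k = 0 := by
    by_contra hne
    have : (1:ℝ) ≤ |(k:ℝ)| := by
      rw [← Int.cast_abs]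
      exact_mod_cast Int.one_le_abs hne
    linarith
  simp [hk0] at h3; linarith

lemma sine_coeffs_zero (p : ℕ) (θ : Fin p → ℝ) (hθ0 : ∀ k, 0 < θ k) (hθπ : ∀ k, θ k < π)
    (hinj : Function.Injective θ) (g : Fin p → ℝ)
    (hg : ∀ k : Fin p, ∑ j : Fin p, g j * Real.sin ((j.1 + 1) * θ k) = 0) :
    ∀ j₀ : Fin p, g j₀ = 0 := by
  set Q : Polynomial ℂ :=
    ∑ j : Fin p, C (g j : ℂ) * (X ^ (p + (j.1 + 1)) - X ^ (p - (j.1 + 1))) with hQ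
  -- evaluation formula
  have heval : ∀ x : ℝ, Q.eval (Complex.exp (x * Complex.I)) =
      Complex.exp (p * x * Complex.I) * (2 * Complex.I) *
        ((∑ j : Fin p, g j * Real.sin ((j.1 + 1) * x) : ℝ) : ℂ) := by
    intro x
    rw [hQ, eval_finset_sum]
    push_cast [Complex.ofReal_sin]
    rw [Finset.mul_sum]
    refine Finset.sum_congr rfl fun j _ => ?_
    have hjp : j.1 + 1 ≤ p := j.2
    simp only [eval_mul, eval_sub, eval_pow, eval_C, eval_X]
    rw [← Complex.exp_nat_mul, ← Complex.exp_nat_mul]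
    have e1 : ((p + (j.1 + 1) : ℕ) : ℂ) * ((x : ℂ) * Complex.I) =
        (p : ℂ) * x * Complex.I + (((j.1 : ℂ) + 1) * x) * Complex.I := by
      push_cast; ring
    have e2 : ((p - (j.1 + 1) : ℕ) : ℂ) * ((x : ℂ) * Complex.I) =
        (p : ℂ) * x * Complex.I + (-(((j.1 : ℂ) + 1) * x)) * Complex.I := by
      rw [Nat.cast_sub hjp]; push_cast; ring
    rw [e1, e2, Complex.exp_add, Complex.exp_add, Complex.exp_mul_I, Complex.exp_mul_I,
      Complex.exp_mul_I, Complex.cos_neg, Complex.sin_neg]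
    ring
  -- the polynomial vanishes at 2p+1 distinct points
  have hQ0 : Q = 0 := by
    set θ' : Fin p ⊕ Fin p ⊕ Unit → ℝ :=
      Sum.elim θ (Sum.elim (fun k => -θ k) fun _ => 0) with hθ'
    have hπ := Real.pi_pos
    have hθ'π : ∀ i, |θ' i| < π := by
      rintro (k | k | u) <;> simp only [hθ', Sum.elim_inl, Sum.elim_inr]
      · rw [abs_lt]; exact ⟨by linarith [hθ0 k], hθπ k⟩
      · rw [abs_neg, abs_lt]; exact ⟨by linarith [hθ0 k], hθπ k⟩
      · simpa using hπ
    have hθ'inj : Function.Injective θ' := by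
      rintro (k | k | u) (l | l | w) h <;>
        simp only [hθ', Sum.elim_inl, Sum.elim_inr] at h
      · exact congrArg _ (hinj h)
      · exfalso; linarith [hθ0 k, hθ0 l]
      · exfalso; linarith [hθ0 k]
      · exfalso; linarith [hθ0 k, hθ0 l]
      · exact congrArg _ (congrArg _ (hinj (neg_injective h)))
      · exfalso; linarith [hθ0 k]
      · exfalso; linarith [hθ0 l]
      · exfalso; linarith [hθ0 l]
      · rcases u; rcases w; rfl
    have hfinj : Function.Injective fun i => Complex.exp (θ' i * Complex.I) := by
      intro i i' h
      exact hθ'inj (exp_I_inj (hθ'π i) (hθ'π i') h)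
    apply Polynomial.eq_zero_of_natDegree_lt_card_of_eval_eq_zero Q hfinj
    · rintro (k | k | u) <;> rw [heval]
      · simp only [hθ', Sum.elim_inl]
        rw [hg k]; simp
      · simp only [hθ', Sum.elim_inr, Sum.elim_inl]
        have : ∑ j : Fin p, g j * Real.sin ((j.1 + 1) * -θ k) = 0 := by
          simp only [mul_neg, Real.sin_neg]
          simpa [Finset.sum_neg_distrib, mul_neg] using congrArg Neg.neg (hg k)
        rw [this]; simp
      · simp [hθ']
    · have hdeg : Q.natDegree ≤ 2 * p := by
        rw [hQ]
        apply Polynomial.natDegree_sum_le_of_forall_le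
        intro j _
        refine (Polynomial.natDegree_C_mul_le _ _).trans ?_
        refine (Polynomial.natDegree_sub_le _ _).trans ?_
        simp only [natDegree_X_pow]
        have := j.2; omega
      have hcard : Fintype.card (Fin p ⊕ Fin p ⊕ Unit) = 2 * p + 1 := by
        simp [Fintype.card_sum]; omega
      omega
  -- extract coefficients
  intro j₀
  have hc := congrArg (fun q => Polynomial.coeff q (p + (j₀.1 + 1))) hQ0
  simp only [hQ, Polynomial.finset_sum_coeff, Polynomial.coeff_zero, Polynomial.coeff_C_mul,
    Polynomial.coeff_sub, Polynomial.coeff_X_pow] at hc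
  have hterm : ∀ j : Fin p, (g j : ℂ) *
      ((if p + (j₀.1 + 1) = p + (j.1 + 1) then (1:ℂ) else 0) -
        if p + (j₀.1 + 1) = p - (j.1 + 1) then (1:ℂ) else 0) =
      if j = j₀ then (g j₀ : ℂ) else 0 := by
    intro j
    have h2 : ¬ (p + (j₀.1 + 1) = p - (j.1 + 1)) := by have := j.2; omega
    by_cases h : j = j₀
    · subst h; simp [h2]
    · have h1 : ¬ (p + (j₀.1 + 1) = p + (j.1 + 1)) := fun hh => h (Fin.ext (by omega))
      simp [h1, h2, h]
      intro hh; exact absurd (Fin.ext (by exact_mod_cast hh.symm)) h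
  rw [Finset.sum_congr rfl fun j _ => hterm j] at hc
  simp only [Finset.sum_ite_eq', Finset.mem_univ, if_true] at hc
  exact_mod_cast hc

lemma abstract_key {N p m : ℕ} (hpN : p + m = N + 1) (hm : 1 ≤ m)
    (v : Fin m → Fin N → ℝ) (s : Fin p → Fin N → ℝ)
    (hs : LinearIndependent ℝ s) :
    ∃ (α : Fin m → ℝ) (c : Fin p → ℝ), α ≠ 0 ∧
      ∑ i, α i • v i = ∑ j, c j • s j := by
  set V := Submodule.span ℝ (Set.range s) with hV
  have hVrank : finrank ℝ V = p := by
    rw [hV, finrank_span_eq_card hs, Fintype.card_fin]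
  have hQrank : finrank ℝ ((Fin N → ℝ) ⧸ V) = N - p := by
    have := Submodule.finrank_quotient_add_finrank V
    rw [hVrank, finrank_fin_fun] at this
    omega
  set L := Fintype.linearCombination ℝ v with hL
  set f := V.mkQ.comp L with hf
  have hninj : ¬ Function.Injective f := by
    intro h
    have := LinearMap.finrank_le_finrank_of_injective h
    rw [finrank_fin_fun, hQrank] at this
    omega
  rw [Function.not_injective_iff] at hninj
  obtain ⟨x, y, hxy, hne⟩ := hninj
  refine ⟨x - y, ?_⟩
  have hmem : L (x - y) ∈ V := by
    have : f (x - y) = 0 := by rw [map_sub, hxy, sub_self]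
    rwa [hf, LinearMap.comp_apply, Submodule.mkQ_apply,
      Submodule.Quotient.mk_eq_zero] at this
  rw [hV, Submodule.mem_span_range_iff_exists_fun] at hmem
  obtain ⟨c, hc⟩ := hmem
  refine ⟨c, sub_ne_zero.mpr hne, ?_⟩
  rw [hL, Fintype.linearCombination_apply] at hc; rw [← hc]

lemma sum_Icc_one (q : ℕ) (f : ℕ → ℝ) : ∑ i ∈ Icc 1 q, f i = ∑ i : Fin q, f (i.1 + 1) := by
  rw [← Finset.Ico_add_one_right_eq_Icc, Finset.sum_Ico_eq_sum_range]
  have hq : q + 1 - 1 = q := Nat.succ_sub_one q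
  rw [hq, ← Fin.sum_univ_eq_sum_range (fun i => f (1 + i))]
  exact Finset.sum_congr rfl fun i _ => by rw [Nat.add_comm]

theorem stmt12 (n m : ℕ) (hn : 1 ≤ n) (hm : 1 ≤ m) (hnm : 3 ≤ n + m)
    (K : ℕ → ℝ → ℝ)
    (hodd : ∀ i ∈ Finset.Icc 1 m, ∀ x, K i (-x) = -K i x)
    (hper : ∀ i ∈ Finset.Icc 1 m, ∀ x, K i (x + 2 * π) = K i x)
    (hcont : ∀ i ∈ Finset.Icc 1 m, ContinuousOn (K i) (Set.Ioo 0 (2 * π)))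
    (t : ℕ → ℝ)
    (ht : ∀ k ∈ Finset.Icc 1 (n + m - 2), t k ∈ Set.Ioo 0 π)
    (hmono : ∀ k l, 1 ≤ k → k < l → l ≤ n + m - 2 → t k < t l) :
    ∃ α b : ℕ → ℝ, (∃ i ∈ Finset.Icc 1 m, α i ≠ 0) ∧
      ∀ k ∈ Finset.Icc 1 (n + m - 2),
        ∑ i ∈ Finset.Icc 1 m, α i * K i (t k) =
          ∑ j ∈ Finset.Icc 1 (n - 1), b j * Real.sin (j * t k) := by
  set N := n + m - 2 with hN
  set p := n - 1 with hp
  have hpN : p + m = N + 1 := by omega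
  have hple : p ≤ N := by omega
  have htmem : ∀ k : Fin N, t (k.1 + 1) ∈ Set.Ioo 0 π := fun k =>
    ht (k.1 + 1) (Finset.mem_Icc.mpr ⟨by omega, by omega⟩)
  set v : Fin m → Fin N → ℝ := fun i k => K (i.1 + 1) (t (k.1 + 1)) with hv
  set s : Fin p → Fin N → ℝ := fun j k => Real.sin ((j.1 + 1) * t (k.1 + 1)) with hs'
  have hs : LinearIndependent ℝ s := by
    rw [Fintype.linearIndependent_iff]
    intro g hg
    refine sine_coeffs_zero p (fun k : Fin p => t (k.1 + 1))
      (fun k => (htmem ⟨k.1, lt_of_lt_of_le k.2 hple⟩).1)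
      (fun k => (htmem ⟨k.1, lt_of_lt_of_le k.2 hple⟩).2) ?_ g ?_
    · intro k l hkl
      have hkl : t (k.1 + 1) = t (l.1 + 1) := hkl
      by_contra hne
      rcases lt_trichotomy k.1 l.1 with h | h | h
      · have := hmono (k.1 + 1) (l.1 + 1) (by omega) (by omega) (by have := l.2; omega)
        rw [hkl] at this; exact lt_irrefl _ this
      · exact hne (Fin.ext h)
      · have := hmono (l.1 + 1) (k.1 + 1) (by omega) (by omega) (by have := k.2; omega)
        rw [hkl] at this; exact lt_irrefl _ this
    · intro k
      have := congrFun hg ⟨k.1, lt_of_lt_of_le k.2 hple⟩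
      simpa [Finset.sum_apply, hs'] using this
  obtain ⟨α₀, c₀, hα₀, hsum⟩ := abstract_key hpN hm v s hs
  refine ⟨fun i => if h : 1 ≤ i ∧ i ≤ m then α₀ ⟨i - 1, by omega⟩ else 0,
    fun j => if h : 1 ≤ j ∧ j ≤ p then c₀ ⟨j - 1, by omega⟩ else 0, ?_, ?_⟩
  · obtain ⟨i₀, hi₀⟩ := Function.ne_iff.mp hα₀
    refine ⟨i₀.1 + 1, Finset.mem_Icc.mpr ⟨by omega, by omega⟩, ?_⟩
    simp only [Pi.zero_apply] at hi₀
    show (if h : 1 ≤ i₀.1 + 1 ∧ i₀.1 + 1 ≤ m then α₀ ⟨i₀.1 + 1 - 1, by omega⟩ else 0) ≠ 0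
    rw [dif_pos ⟨by omega, by have := i₀.2; omega⟩]
    have he : (⟨i₀.1 + 1 - 1, by omega⟩ : Fin m) = i₀ := Fin.ext (by simp)
    rw [he]; exact hi₀
  · intro k hk
    rw [Finset.mem_Icc] at hk
    set kf : Fin N := ⟨k - 1, by omega⟩ with hkf
    have hkk : kf.1 + 1 = k := by simp only [hkf]; omega
    rw [sum_Icc_one, sum_Icc_one]
    have hαat : ∀ i : Fin m,
        (if h : 1 ≤ i.1 + 1 ∧ i.1 + 1 ≤ m then α₀ ⟨i.1 + 1 - 1, by omega⟩ else 0) = α₀ i := by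
      intro i
      rw [dif_pos ⟨by omega, by have := i.2; omega⟩]
      exact congrArg α₀ (Fin.ext (by simp))
    have hbat : ∀ j : Fin p,
        (if h : 1 ≤ j.1 + 1 ∧ j.1 + 1 ≤ p then c₀ ⟨j.1 + 1 - 1, by omega⟩ else 0) = c₀ j := by
      intro j
      rw [dif_pos ⟨by omega, by have := j.2; omega⟩]
      exact congrArg c₀ (Fin.ext (by simp))
    have hL := congrFun hsum kf
    simp only [Finset.sum_apply, Pi.smul_apply, smul_eq_mul, hv, hs', hkk] at hL
    calc ∑ i : Fin m,
        (if h : 1 ≤ i.1 + 1 ∧ i.1 + 1 ≤ m then α₀ ⟨i.1 + 1 - 1, by omega⟩ else 0) * K (i.1 + 1) (t k)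
        = ∑ i : Fin m, α₀ i * K (i.1 + 1) (t k) :=
          Finset.sum_congr rfl fun i _ => by rw [hαat i]
      _ = ∑ j : Fin p, c₀ j * Real.sin ((j.1 + 1) * t k) := hL
      _ = ∑ j : Fin p,
          (if h : 1 ≤ j.1 + 1 ∧ j.1 + 1 ≤ p then c₀ ⟨j.1 + 1 - 1, by omega⟩ else 0) *
            Real.sin ((j.1 + 1 : ℕ) * t k) := by
          refine Finset.sum_congr rfl fun j _ => ?_
          rw [hbat j]; push_cast; ring_nf
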